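/- Assume complete vertical transmission v_w = 1 (so v_u = 0) and R_0w = b_f ψ φ_w/((μ_a+ψ)μ_fw) > 1. Then the complete-infection point (A_u, A_w, F_u, F_w, M_u, M_w) = (0, K_a(1 − 1/R_0w), 0, b_f ψ A_w/μ_fw, 0, b_m ψ A_w/μ_mw) is an equilibrium of the Wolbachia mosquito model with A_w, F_w, M_w > 0, and it is the unique equilibrium with A_u = F_u = M_u = 0 and A_w > 0. -/

import Mathlib

/-- The Wolbachia mosquito model vector field on states
`x = (A_u, A_w, F_u, F_w, M_u, M_w)` (indices 0..5). -/
noncomputable def wolbField (bf vw φu φw ψ μa μfu μfw μmu μmw Ka : ℝ)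
    (x : Fin 6 → ℝ) : Fin 6 → ℝ :=
  ![ φu * x 2 * (x 4 / (x 4 + x 5)) * (1 - (x 0 + x 1) / Ka)
      + (1 - vw) * (φw * x 3 * (x 4 / (x 4 + x 5)) * (1 - (x 0 + x 1) / Ka)
          + φw * x 3 * (1 - x 4 / (x 4 + x 5)) * (1 - (x 0 + x 1) / Ka))
      - (μa + ψ) * x 0,
    vw * (φw * x 3 * (x 4 / (x 4 + x 5)) * (1 - (x 0 + x 1) / Ka)
          + φw * x 3 * (1 - x 4 / (x 4 + x 5)) * (1 - (x 0 + x 1) / Ka))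
      - (μa + ψ) * x 1,
    bf * ψ * x 0 - μfu * x 2,
    bf * ψ * x 1 - μfw * x 3,
    (1 - bf) * ψ * x 0 - μmu * x 4,
    (1 - bf) * ψ * x 1 - μmw * x 5 ]

/-- under complete vertical transmission (`v_w = 1`) and `R₀w > 1`,
the complete-infection point is a strictly positive (in its infected components)
equilibrium, and it is the unique equilibrium with `A_u = F_u = M_u = 0` and
`A_w > 0`. -/
theorem complete_infection_equilibrium_exists_unique
    (bf φu φw ψ μa μfu μfw μmu μmw Ka : ℝ)
    (hbf : 0 < bf) (hbf1 : bf < 1)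
    (hφu : 0 < φu) (hφw : 0 < φw) (hψ : 0 < ψ) (hμa : 0 < μa)
    (hμfu : 0 < μfu) (hμfw : 0 < μfw) (hμmu : 0 < μmu) (hμmw : 0 < μmw)
    (hKa : 0 < Ka)
    (hR0w : 1 < bf * ψ * φw / ((μa + ψ) * μfw))
    (Aw : ℝ) (hAw : Aw = Ka * (1 - 1 / (bf * ψ * φw / ((μa + ψ) * μfw))))
    (x0 : Fin 6 → ℝ)
    (hx0 : x0 = ![0, Aw, 0, bf * ψ * Aw / μfw, 0, (1 - bf) * ψ * Aw / μmw]) :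
    (0 < x0 1 ∧ 0 < x0 3 ∧ 0 < x0 5) ∧
    wolbField bf 1 φu φw ψ μa μfu μfw μmu μmw Ka x0 = 0 ∧
    ∀ x : Fin 6 → ℝ, 0 < x 4 + x 5 →
      wolbField bf 1 φu φw ψ μa μfu μfw μmu μmw Ka x = 0 →
      x 0 = 0 → x 2 = 0 → x 4 = 0 → 0 < x 1 → x = x0 := by
  have hD : 0 < (μa + ψ) * μfw := by positivity
  have hN : 0 < bf * ψ * φw := by positivity
  have hR' : (μa + ψ) * μfw < bf * ψ * φw := by
    rw [lt_div_iff₀ hD] at hR0w; linarith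
  have hfrac : (μa + ψ) * μfw / (bf * ψ * φw) < 1 := by
    rw [div_lt_one hN]; exact hR'
  have hAw' : Aw = Ka * (1 - (μa + ψ) * μfw / (bf * ψ * φw)) := by
    rw [hAw, one_div, inv_div]
  have hAwpos : 0 < Aw := by
    rw [hAw']
    have h1 : 0 < 1 - (μa + ψ) * μfw / (bf * ψ * φw) := by linarith
    positivity
  have hbf' : 0 < 1 - bf := by linarith
  have v0 : x0 0 = 0 := by rw [hx0]; rfl
  have v1 : x0 1 = Aw := by rw [hx0]; rfl
  have v2 : x0 2 = 0 := by rw [hx0]; rfl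
  have v3 : x0 3 = bf * ψ * Aw / μfw := by rw [hx0]; rfl
  have v4 : x0 4 = 0 := by rw [hx0]; rfl
  have v5 : x0 5 = (1 - bf) * ψ * Aw / μmw := by rw [hx0]; rfl
  refine ⟨⟨?_, ?_, ?_⟩, ?_, ?_⟩
  · rw [v1]; exact hAwpos
  · rw [v3]; positivity
  · rw [v5]; positivity
  · funext i
    fin_cases i
    · show φu * x0 2 * (x0 4 / (x0 4 + x0 5)) * (1 - (x0 0 + x0 1) / Ka)
        + (1 - 1) * (φw * x0 3 * (x0 4 / (x0 4 + x0 5)) * (1 - (x0 0 + x0 1) / Ka)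
            + φw * x0 3 * (1 - x0 4 / (x0 4 + x0 5)) * (1 - (x0 0 + x0 1) / Ka))
        - (μa + ψ) * x0 0 = 0
      rw [v0, v2]; ring
    · show 1 * (φw * x0 3 * (x0 4 / (x0 4 + x0 5)) * (1 - (x0 0 + x0 1) / Ka)
            + φw * x0 3 * (1 - x0 4 / (x0 4 + x0 5)) * (1 - (x0 0 + x0 1) / Ka))
        - (μa + ψ) * x0 1 = 0
      rw [v0, v1, v3, v4, v5, hAw']
      have h5ne : (1 - bf) * ψ * (Ka * (1 - (μa + ψ) * μfw / (bf * ψ * φw))) / μmw ≠ 0 := by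
        rw [hAw'] at hAwpos; positivity
      rw [zero_add, zero_div, zero_add]
      field_simp
      ring
    · show bf * ψ * x0 0 - μfu * x0 2 = 0
      rw [v0, v2]; ring
    · show bf * ψ * x0 1 - μfw * x0 3 = 0
      rw [v1, v3]; field_simp; ring
    · show (1 - bf) * ψ * x0 0 - μmu * x0 4 = 0
      rw [v0, v4]; ring
    · show (1 - bf) * ψ * x0 1 - μmw * x0 5 = 0
      rw [v1, v5]; field_simp; ring
  · intro x hx45 hfield hx0' hx2 hx4 hx1
    have h1 : 1 * (φw * x 3 * (x 4 / (x 4 + x 5)) * (1 - (x 0 + x 1) / Ka)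
            + φw * x 3 * (1 - x 4 / (x 4 + x 5)) * (1 - (x 0 + x 1) / Ka))
        - (μa + ψ) * x 1 = 0 := congrFun hfield 1
    have h3 : bf * ψ * x 1 - μfw * x 3 = 0 := congrFun hfield 3
    have h5 : (1 - bf) * ψ * x 1 - μmw * x 5 = 0 := congrFun hfield 5
    rw [hx0', hx4] at h1
    rw [zero_div, zero_add] at h1
    have hx3 : x 3 = bf * ψ * x 1 / μfw := by
      rw [eq_div_iff (ne_of_gt hμfw)]; linarith
    have hx5 : x 5 = (1 - bf) * ψ * x 1 / μmw := by
      rw [eq_div_iff (ne_of_gt hμmw)]; linarith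
    rw [hx3] at h1
    have hKa' : (Ka : ℝ) ≠ 0 := ne_of_gt hKa
    have hfw' : μfw ≠ 0 := ne_of_gt hμfw
    have hfac : x 1 * (φw * bf * ψ * (Ka - x 1) - (μa + ψ) * (μfw * Ka)) = 0 := by
      field_simp at h1
      linear_combination h1
    have hfac2 : φw * bf * ψ * (Ka - x 1) - (μa + ψ) * (μfw * Ka) = 0 := by
      rcases mul_eq_zero.mp hfac with h | h
      · exact absurd h (ne_of_gt hx1)
      · exact h
    have hx1val : x 1 = Aw := by
      rw [hAw']
      field_simp
      linear_combination -hfac2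
    have e0 : x 0 = x0 0 := by rw [v0, hx0']
    have e1 : x 1 = x0 1 := by rw [v1, hx1val]
    have e2 : x 2 = x0 2 := by rw [v2, hx2]
    have e3 : x 3 = x0 3 := by rw [v3, hx3, hx1val]
    have e4 : x 4 = x0 4 := by rw [v4, hx4]
    have e5 : x 5 = x0 5 := by rw [v5, hx5, hx1val]
    funext i
    fin_cases i
    exacts [e0, e1, e2, e3, e4, e5]
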